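/- (Practical stability bound, Theorem 1) Under the ISS Lyapunov inequality ⟨∇V(ξ), (A-LC)ξ - Le⟩ ≤ -αV(ξ) + γ|e|², parameters chosen per items (i)–(iv) (σc₂ < γ via σ ≤ σ*, c₂ ≤ c₂*; c₁ ≥ c₁* > ᾱ(1-σ*c₂*/γ)⁻¹; c₃ ∈ [0,1]; ε ≤ ε* = νᾱγ(γ + c₂*d)⁻¹ with d = σ*(1 - σ*c₂*/γ - ᾱ/c₁*)⁻¹), every solution of the hybrid estimation system satisfies V(ξ(t,j)) + dη(t,j) ≤ e^{-ᾱt}(V(ξ(0,0)) + dη(0,0)) + ν for all hybrid times (t,j). -/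

import Mathlib

open RealInnerProductSpace

lemma aux_antitone {a b k ν : ℝ} {f f' : ℝ → ℝ}
    (hf : ∀ s ∈ Set.Icc a b, HasDerivAt f (f' s) s)
    (hle : ∀ s ∈ Set.Icc a b, f' s + k * (f s - ν) ≤ 0) :
    AntitoneOn (fun s => Real.exp (k * s) * (f s - ν)) (Set.Icc a b) := by
  have hg : ∀ s ∈ Set.Icc a b,
      HasDerivAt (fun u => Real.exp (k * u) * (f u - ν))
        (Real.exp (k * s) * (f' s + k * (f s - ν))) s := by
    intro s hs
    have h1 : HasDerivAt (fun u : ℝ => Real.exp (k * u)) (Real.exp (k * s) * k) s := by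
      simpa using ((hasDerivAt_id s).const_mul k).exp
    have h2 := (hf s hs).sub_const ν
    have := h1.mul h2
    exact this.congr_deriv (by ring)
  apply antitoneOn_of_deriv_nonpos (convex_Icc a b)
  · exact fun s hs => (hg s hs).continuousAt.continuousWithinAt
  · rw [interior_Icc]
    exact fun s hs => ((hg s (Set.Ioo_subset_Icc_self hs)).differentiableAt).differentiableWithinAt
  · rw [interior_Icc]
    intro s hs
    rw [(hg s (Set.Ioo_subset_Icc_self hs)).deriv]
    have := hle s (Set.Ioo_subset_Icc_self hs)
    have he := Real.exp_pos (k * s)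
    nlinarith

set_option maxHeartbeats 2000000 in
/-- Theorem 1: practical stability bound for the hybrid
event-triggered estimation system. The hybrid arc is modeled by a sequence of
flow intervals [t i, t (i+1)] (the i-th interval carries jump counter i),
with the jump map relating consecutive pieces. -/
theorem stmt_13 {nx ny nu : ℕ}
    (A P : Matrix (Fin nx) (Fin nx) ℝ)
    (B : Matrix (Fin nx) (Fin nu) ℝ)
    (C : Matrix (Fin ny) (Fin nx) ℝ) (L : Matrix (Fin nx) (Fin ny) ℝ)
    (hP : P.PosDef)
    (α γ ᾱ ν σs c₂s c₁s d σ c₂ c₁ c₃ ε : ℝ)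
    (hα : 0 < α) (hγ : 0 < γ)
    -- ISS Lyapunov inequality for V(ξ) = ⟪ξ, Pξ⟫
    (hISS : ∀ (ξv : EuclideanSpace ℝ (Fin nx)) (ev : EuclideanSpace ℝ (Fin ny)),
      ⟪(2 : ℝ) • (Matrix.toEuclideanLin P ξv),
        Matrix.toEuclideanLin (A - L * C) ξv - Matrix.toEuclideanLin L ev⟫
        ≤ -α * ⟪ξv, Matrix.toEuclideanLin P ξv⟫ + γ * ‖ev‖ ^ 2)
    (hᾱ : ᾱ ∈ Set.Ioc (0 : ℝ) α) (hν : 0 < ν)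
    -- parameter selection (items (i)-(iv) of Theorem 1)
    (hσs : 0 < σs) (hc₂s : 0 ≤ c₂s) (hσc : σs * c₂s < γ)
    (hσ : σ ∈ Set.Icc 0 σs) (hc₂ : c₂ ∈ Set.Icc 0 c₂s)
    (hc₁s : c₁s > ᾱ * (1 - σs * c₂s / γ)⁻¹) (hc₁spos : 0 < c₁s) (hc₁ : c₁ ≥ c₁s)
    (hc₃ : c₃ ∈ Set.Icc (0 : ℝ) 1)
    (hd : d = σs * (1 - σs * c₂s / γ - ᾱ / c₁s)⁻¹)
    (hε : ε ∈ Set.Ioc 0 (ν * ᾱ * γ * (γ + c₂s * d)⁻¹))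
    -- the hybrid solution pair, piecewise on flow intervals
    (t : ℕ → ℝ) (ht0 : t 0 = 0) (htmono : ∀ i, t i ≤ t (i + 1))
    (x ξ : ℕ → ℝ → EuclideanSpace ℝ (Fin nx))
    (e : ℕ → ℝ → EuclideanSpace ℝ (Fin ny))
    (η : ℕ → ℝ → ℝ) (u : ℕ → ℝ → EuclideanSpace ℝ (Fin nu))
    -- flow dynamics and flow set on each interval
    (hflowx : ∀ i, ∀ s ∈ Set.Icc (t i) (t (i + 1)),
      HasDerivAt (x i)
        (Matrix.toEuclideanLin A (x i s) + Matrix.toEuclideanLin B (u i s)) s)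
    (hflowξ : ∀ i, ∀ s ∈ Set.Icc (t i) (t (i + 1)),
      HasDerivAt (ξ i)
        (Matrix.toEuclideanLin (A - L * C) (ξ i s) - Matrix.toEuclideanLin L (e i s)) s)
    (hflowe : ∀ i, ∀ s ∈ Set.Icc (t i) (t (i + 1)),
      HasDerivAt (e i)
        (-(Matrix.toEuclideanLin (C * A) (x i s)) - Matrix.toEuclideanLin (C * B) (u i s)) s)
    (hflowη : ∀ i, ∀ s ∈ Set.Icc (t i) (t (i + 1)),
      HasDerivAt (η i) (-c₁ * η i s + c₂ * ‖e i s‖ ^ 2) s)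
    (hflowset : ∀ i, ∀ s ∈ Set.Icc (t i) (t (i + 1)),
      γ * ‖e i s‖ ^ 2 ≤ σ * c₁ * η i s + ε ∧ 0 ≤ η i s)
    -- jump set and jump map at each transmission instant
    (hjumpset : ∀ i, γ * ‖e i (t (i + 1))‖ ^ 2 ≥ σ * c₁ * η i (t (i + 1)) + ε)
    (hjumpx : ∀ i, x (i + 1) (t (i + 1)) = x i (t (i + 1)))
    (hjumpξ : ∀ i, ξ (i + 1) (t (i + 1)) = ξ i (t (i + 1)))
    (hjumpe : ∀ i, e (i + 1) (t (i + 1)) = 0)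
    (hjumpη : ∀ i, η (i + 1) (t (i + 1)) = c₃ * η i (t (i + 1))) :
    ∀ j, ∀ s ∈ Set.Icc (t j) (t (j + 1)),
      ⟪ξ j s, Matrix.toEuclideanLin P (ξ j s)⟫ + d * η j s ≤
        Real.exp (-ᾱ * s) *
          (⟪ξ 0 0, Matrix.toEuclideanLin P (ξ 0 0)⟫ + d * η 0 0) + ν := by
  obtain ⟨hᾱ0, hᾱα⟩ := hᾱ
  obtain ⟨hσ0, hσs'⟩ := hσ
  obtain ⟨hc₂0, hc₂s'⟩ := hc₂
  obtain ⟨hc₃0, hc₃1⟩ := hc₃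
  obtain ⟨hε0, hεs⟩ := hε
  -- basic scalar facts
  have h1γ : 0 < 1 - σs * c₂s / γ := by
    have : σs * c₂s / γ < 1 := (div_lt_one hγ).2 hσc
    linarith
  have hc₁pos : 0 < c₁ := lt_of_lt_of_le hc₁spos hc₁
  have hden : 0 < 1 - σs * c₂s / γ - ᾱ / c₁s := by
    have h := mul_lt_mul_of_pos_right hc₁s h1γ
    rw [mul_assoc, inv_mul_cancel₀ h1γ.ne', mul_one] at h
    have : ᾱ / c₁s < 1 - σs * c₂s / γ := (div_lt_iff₀ hc₁spos).2 (by linarith)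
    linarith
  have hdpos : 0 < d := hd ▸ mul_pos hσs (inv_pos.2 hden)
  have hkey : d * (1 - σs * c₂s / γ - ᾱ / c₁s) = σs := by
    rw [hd, mul_assoc, inv_mul_cancel₀ hden.ne', mul_one]
  -- division-free version of hkey
  have hkey2 : c₁s * (d * γ - σs * γ - d * (σs * c₂s)) = ᾱ * d * γ := by
    have h := hkey
    field_simp at h
    nlinarith [h]
  -- d*γ - σs*γ - d*σs*c₂s ≥ 0
  have hpar : 0 ≤ d * γ - σs * γ - d * (σs * c₂s) := by
    nlinarith [hkey2, mul_pos hᾱ0 (mul_pos hdpos hγ)]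
  -- coefficient inequality for the η terms (times γ)
  have coefA : (ᾱ - c₁) * d * γ + (γ + d * c₂) * (σ * c₁) ≤ 0 := by
    nlinarith [mul_le_mul_of_nonneg_left (sub_nonneg.2 hc₁) hpar,
      mul_nonneg (mul_nonneg hdpos.le hc₁pos.le)
        (sub_nonneg.2 (mul_le_mul hσs' hc₂s' hc₂0 hσs.le)),
      mul_nonneg hc₁pos.le (mul_nonneg (sub_nonneg.2 hσs') hγ.le),
      hkey2]
  -- ε inequality (times γ)
  have coefB : (γ + d * c₂) * ε ≤ ᾱ * ν * γ := by
    have hγd : 0 < γ + c₂s * d := by positivity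
    have h1 : ε * (γ + c₂s * d) ≤ ν * ᾱ * γ := by
      have := mul_le_mul_of_nonneg_right hεs hγd.le
      rwa [mul_assoc, inv_mul_cancel₀ hγd.ne', mul_one] at this
    have ha : (γ + d * c₂) * ε ≤ (γ + c₂s * d) * ε := by
      have : d * c₂ ≤ c₂s * d := by nlinarith
      exact mul_le_mul_of_nonneg_right (by linarith) hε0.le
    have hb := mul_comm (γ + c₂s * d) ε
    linarith [ha, h1, hb]
  -- nonnegativity of V
  have hVpos : ∀ v : EuclideanSpace ℝ (Fin nx), 0 ≤ ⟪v, Matrix.toEuclideanLin P v⟫ := by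
    intro v
    have h := hP.posSemidef.re_dotProduct_nonneg v
    simpa [Matrix.toEuclideanLin, PiLp.inner_apply, dotProduct, mul_comm,
      Matrix.mulVec, RCLike.re_to_real] using h
  have hsym := Matrix.isHermitian_iff_isSymmetric.1 hP.1
  -- the composite function W i s and antitonicity of exp(ᾱ s)(W i s - ν) on each interval
  set W : ℕ → ℝ → ℝ := fun i s => ⟪ξ i s, Matrix.toEuclideanLin P (ξ i s)⟫ + d * η i s with hW
  have hanti : ∀ i, AntitoneOn (fun s => Real.exp (ᾱ * s) * (W i s - ν))
      (Set.Icc (t i) (t (i + 1))) := by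
    intro i
    apply aux_antitone (f' := fun s =>
      ⟪(2 : ℝ) • (Matrix.toEuclideanLin P (ξ i s)),
        Matrix.toEuclideanLin (A - L * C) (ξ i s) - Matrix.toEuclideanLin L (e i s)⟫
      + d * (-c₁ * η i s + c₂ * ‖e i s‖ ^ 2))
    · intro s hs
      set w := Matrix.toEuclideanLin (A - L * C) (ξ i s) - Matrix.toEuclideanLin L (e i s)
        with hwdef
      have hξd := hflowξ i s hs
      have hPd : HasDerivAt (fun u => Matrix.toEuclideanLin P (ξ i u))
          (Matrix.toEuclideanLin P w) s :=
        (LinearMap.toContinuousLinearMap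
          (Matrix.toEuclideanLin P)).hasFDerivAt.comp_hasDerivAt s hξd
      have hV := hξd.inner ℝ hPd
      have hV' : HasDerivAt (fun u => ⟪ξ i u, Matrix.toEuclideanLin P (ξ i u)⟫)
          (⟪(2 : ℝ) • (Matrix.toEuclideanLin P (ξ i s)), w⟫) s := by
        refine hV.congr_deriv ?_
        rw [real_inner_smul_left, real_inner_comm w, ← hsym w (ξ i s),
          real_inner_comm ((Matrix.toEuclideanLin P) w) (ξ i s)]
        ring
      exact hV'.add ((hflowη i s hs).const_mul d)
    · intro s hs
      have hI := hISS (ξ i s) (e i s)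
      obtain ⟨hfs, hη0⟩ := hflowset i s hs
      have hV0 := hVpos (ξ i s)
      have hE0 : (0:ℝ) ≤ ‖e i s‖ ^ 2 := by positivity
      set Vv := ⟪ξ i s, Matrix.toEuclideanLin P (ξ i s)⟫
      set Hv := η i s
      set Ev := ‖e i s‖ ^ 2
      have key : γ * ((⟪(2 : ℝ) • (Matrix.toEuclideanLin P (ξ i s)),
          Matrix.toEuclideanLin (A - L * C) (ξ i s) - Matrix.toEuclideanLin L (e i s)⟫)
          + d * (-c₁ * Hv + c₂ * Ev) + ᾱ * (Vv + d * Hv - ν)) ≤ 0 := by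
        have hmul1 : (γ + d * c₂) * (γ * Ev) ≤ (γ + d * c₂) * (σ * c₁ * Hv + ε) :=
          mul_le_mul_of_nonneg_left hfs (by positivity)
        have hmul2 : ((ᾱ - c₁) * d * γ + (γ + d * c₂) * (σ * c₁)) * Hv ≤ 0 :=
          mul_nonpos_of_nonpos_of_nonneg coefA hη0
        nlinarith [mul_le_mul_of_nonneg_left hI hγ.le,
          mul_nonneg (mul_nonneg hγ.le (sub_nonneg.2 hᾱα)) hV0]
      have := le_of_mul_le_mul_left (by linarith : γ * ((⟪(2 : ℝ) •
          (Matrix.toEuclideanLin P (ξ i s)),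
          Matrix.toEuclideanLin (A - L * C) (ξ i s) - Matrix.toEuclideanLin L (e i s)⟫)
          + d * (-c₁ * Hv + c₂ * Ev) + ᾱ * (Vv + d * Hv - ν)) ≤ γ * 0) hγ
      simpa [hW] using this
  -- main induction: exp(ᾱ s)(W j s - ν) ≤ W 0 0 - ν on each interval
  have main : ∀ j, ∀ s ∈ Set.Icc (t j) (t (j + 1)),
      Real.exp (ᾱ * s) * (W j s - ν) ≤ W 0 0 - ν := by
    intro j
    induction j with
    | zero =>
      intro s hs
      have h := hanti 0 (Set.left_mem_Icc.2 (htmono 0)) hs hs.1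
      rw [ht0] at h
      simpa using h
    | succ n ih =>
      intro s hs
      have hstep : Real.exp (ᾱ * s) * (W (n+1) s - ν) ≤
          Real.exp (ᾱ * t (n+1)) * (W (n+1) (t (n+1)) - ν) :=
        hanti (n+1) (Set.left_mem_Icc.2 (htmono (n+1))) hs hs.1
      have hη0 := (hflowset n (t (n+1)) (Set.right_mem_Icc.2 (htmono n))).2
      have hjump : W (n+1) (t (n+1)) ≤ W n (t (n+1)) := by
        simp only [hW, hjumpξ n, hjumpη n]
        nlinarith [mul_nonneg hdpos.le hη0]
      have hprev := ih (t (n+1)) (Set.right_mem_Icc.2 (htmono n))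
      have hmid : Real.exp (ᾱ * t (n+1)) * (W (n+1) (t (n+1)) - ν) ≤
          Real.exp (ᾱ * t (n+1)) * (W n (t (n+1)) - ν) :=
        mul_le_mul_of_nonneg_left (by linarith) (Real.exp_pos _).le
      linarith
  -- conclude
  intro j s hs
  have h := main j s hs
  have h2 : Real.exp (-ᾱ * s) * (Real.exp (ᾱ * s) * (W j s - ν)) ≤
      Real.exp (-ᾱ * s) * (W 0 0 - ν) :=
    mul_le_mul_of_nonneg_left h (Real.exp_pos _).le
  rw [← mul_assoc, ← Real.exp_add] at h2
  have h3 : -ᾱ * s + ᾱ * s = 0 := by ring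
  rw [h3, Real.exp_zero, one_mul] at h2
  have h4 : 0 ≤ Real.exp (-ᾱ * s) * ν := by positivity
  have hWj := h2
  simp only [hW] at hWj ⊢
  nlinarith [hWj, h4]
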